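/- If A and B are n×n complex matrices such that the pencil A + λB is singular (i.e., det(A + λB) = 0 for every λ ∈ ℂ), then there exists a nonzero vector x ∈ ℂⁿ with x* A x = 0 and x* B x = 0; that is, (0,0) belongs to the joint numerical range W(A,B). -/

import Mathlib

open Matrix Polynomial

private lemma pencil_coeff_zero {n : ℕ} (A B : Matrix (Fin n) (Fin n) ℂ)
    (p : Fin n → Polynomial ℂ) (i : Fin n) :
    (((A.map C + (X:ℂ[X]) • B.map C) *ᵥ p) i).coeff 0 = (A *ᵥ fun j => (p j).coeff 0) i := by
  simp [Matrix.mulVec, dotProduct, Polynomial.finset_sum_coeff, add_mul,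
    Polynomial.coeff_C_mul, mul_assoc, Polynomial.mul_coeff_zero, Polynomial.coeff_X_zero]

private lemma pencil_coeff_succ {n : ℕ} (A B : Matrix (Fin n) (Fin n) ℂ)
    (p : Fin n → Polynomial ℂ) (i : Fin n) (m : ℕ) :
    (((A.map C + (X:ℂ[X]) • B.map C) *ᵥ p) i).coeff (m+1)
      = (A *ᵥ fun j => (p j).coeff (m+1)) i + (B *ᵥ fun j => (p j).coeff m) i := by
  simp [Matrix.mulVec, dotProduct, Polynomial.finset_sum_coeff, add_mul,
    Polynomial.coeff_C_mul, mul_assoc, Polynomial.coeff_X_mul, Finset.sum_add_distrib]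

private lemma pencil_det_zero {n : ℕ} (A B : Matrix (Fin n) (Fin n) ℂ)
    (hsing : ∀ z : ℂ, ¬ IsUnit (A + z • B)) :
    ((A.map C + (X:ℂ[X]) • B.map C)).det = 0 := by
  apply Polynomial.zero_of_eval_zero
  intro z
  have h1 : (Polynomial.evalRingHom z).mapMatrix (A.map C + (X:ℂ[X]) • B.map C) = A + z • B := by
    ext i j
    simp only [RingHom.mapMatrix_apply, Matrix.map_apply, Matrix.add_apply, Matrix.smul_apply,
      Polynomial.coe_evalRingHom, Polynomial.eval_add, Polynomial.eval_mul, Polynomial.eval_C,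
      Polynomial.eval_X, smul_eq_mul, Pi.add_apply]
  have h2 := RingHom.map_det (Polynomial.evalRingHom z) (A.map C + (X:ℂ[X]) • B.map C)
  rw [h1] at h2
  have h3 : ¬ IsUnit (A + z • B).det := by
    rw [← Matrix.isUnit_iff_isUnit_det]; exact hsing z
  rw [isUnit_iff_ne_zero, not_not] at h3
  simpa [h3] using h2

private lemma mulVec_finsum {m : ℕ} (M : Matrix (Fin m) (Fin m) ℂ) {ι : Type*} (s : Finset ι)
    (f : ι → Fin m → ℂ) : M *ᵥ (∑ i ∈ s, f i) = ∑ i ∈ s, M *ᵥ f i := by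
  simpa only [Matrix.mulVecLin_apply] using map_sum M.mulVecLin f s

private lemma dotProduct_finsum {m : ℕ} (v : Fin m → ℂ) {ι : Type*} (s : Finset ι)
    (f : ι → Fin m → ℂ) : v ⬝ᵥ (∑ i ∈ s, f i) = ∑ i ∈ s, v ⬝ᵥ f i := by
  simp [dotProduct, Finset.mul_sum, Finset.sum_apply]
  rw [Finset.sum_comm]

private lemma coeff_build {N : ℕ} (c : ℕ → ℂ) (k : ℕ) :
    (∑ m ∈ Finset.range N, (Polynomial.C (c m) * X ^ m : ℂ[X])).coeff k
      = if k < N then c k else 0 := by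
  simp [Polynomial.finset_sum_coeff, Polynomial.coeff_C_mul, Polynomial.coeff_X_pow,
    mul_ite, mul_one, mul_zero, Finset.sum_ite_eq, Finset.mem_range]

/-- If the pencil `A + λ B` of `n × n` complex matrices is singular (i.e. `A + λ₀ B`
is non-invertible for every `λ₀ ∈ ℂ`), then `(0,0)` belongs to the joint numerical
range of `(A, B)`: there is a nonzero vector `x` with `x* A x = 0` and `x* B x = 0`. -/
theorem singular_pencil_zero_in_joint_numerical_range
    (n : ℕ) (A B : Matrix (Fin n) (Fin n) ℂ)
    (hsing : ∀ z : ℂ, ¬ IsUnit (A + z • B)) :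
    ∃ x : Fin n → ℂ, x ≠ 0 ∧ star x ⬝ᵥ (A *ᵥ x) = 0 ∧ star x ⬝ᵥ (B *ᵥ x) = 0 := by
  classical
  have hex : ∃ D : ℕ, ∃ p : Fin n → ℂ[X], p ≠ 0 ∧ (A.map C + (X:ℂ[X]) • B.map C) *ᵥ p = 0 ∧
      ∀ i, (p i).natDegree ≤ D := by
    obtain ⟨v, hv, h⟩ := Matrix.exists_mulVec_eq_zero_iff.mpr (pencil_det_zero A B hsing)
    exact ⟨Finset.univ.sup fun i => (v i).natDegree, v, hv, h,
      fun i => Finset.le_sup (f := fun i => (v i).natDegree) (Finset.mem_univ i)⟩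
  set D := Nat.find hex with hDdef
  obtain ⟨p, hp0, hker, hdeg⟩ := Nat.find_spec hex
  have hmin : ∀ D' < D, ¬ ∃ q : Fin n → ℂ[X], q ≠ 0 ∧ (A.map C + (X:ℂ[X]) • B.map C) *ᵥ q = 0 ∧
      ∀ i, (q i).natDegree ≤ D' := fun D' h => Nat.find_min hex h
  set x : ℕ → Fin n → ℂ := fun m i => (p i).coeff m with hxdef
  have hxhigh : ∀ m, D < m → x m = 0 := by
    intro m hm; funext i
    exact Polynomial.coeff_eq_zero_of_natDegree_lt (lt_of_le_of_lt (hdeg i) hm)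
  have hA0 : A *ᵥ x 0 = 0 := by
    funext i
    have h := pencil_coeff_zero A B p i
    rw [hker] at h
    simpa using h.symm
  have hrec : ∀ m, A *ᵥ x (m+1) + B *ᵥ x m = 0 := by
    intro m; funext i
    have h := pencil_coeff_succ A B p i m
    rw [hker] at h
    simpa using h.symm
  have hBD : B *ᵥ x D = 0 := by
    have h := hrec D
    rw [hxhigh (D+1) (by omega), Matrix.mulVec_zero, zero_add] at h
    exact h
  have hAneg : ∀ m, A *ᵥ x (m+1) = -(B *ᵥ x m) := by
    intro m
    have h := hrec m
    linear_combination (norm := module) h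
  have hx0 : x 0 ≠ 0 := by
    intro hc
    rcases Nat.eq_zero_or_pos D with hD | hD
    · apply hp0; funext i
      have h1 : (p i).natDegree ≤ 0 := hD ▸ hdeg i
      have h5 : (p i).coeff 0 = 0 := by simpa [hxdef] using congrFun hc i
      show p i = 0
      rw [Polynomial.eq_C_of_natDegree_le_zero h1, h5, map_zero]
    · apply hmin (D-1) (by omega)
      have h3 : ∀ j, p j = (p j).divX * X := by
        intro j
        have h4 := Polynomial.divX_mul_X_add (p j)
        have h5 : (p j).coeff 0 = 0 := by simpa [hxdef] using congrFun hc j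
        rw [h5, map_zero, add_zero] at h4
        exact h4.symm
      refine ⟨fun i => (p i).divX, ?_, ?_, ?_⟩
      · intro h
        apply hp0; funext i
        have h2 : (p i).divX = 0 := congrFun h i
        show p i = 0
        rw [h3 i, h2, zero_mul]
      · funext i
        have h6 := congrFun hker i
        rw [Pi.zero_apply] at h6
        show ((A.map C + (X:ℂ[X]) • B.map C) *ᵥ fun j => (p j).divX) i = 0
        have h7 : ((A.map C + (X:ℂ[X]) • B.map C) *ᵥ fun j => (p j).divX) i * X = 0 := by
          rw [← h6]
          simp only [Matrix.mulVec, dotProduct]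
          rw [Finset.sum_mul]
          apply Finset.sum_congr rfl
          intro j _
          rw [mul_assoc, ← h3 j]
        rcases mul_eq_zero.mp h7 with h | h
        · exact h
        · exact absurd h Polynomial.X_ne_zero
      · intro i
        show ((p i).divX).natDegree ≤ D - 1
        rw [Polynomial.natDegree_divX_eq_natDegree_tsub_one]
        exact Nat.sub_le_sub_right (hdeg i) 1
  have hindep : ∀ a : ℕ → ℂ, (∑ m ∈ Finset.range (D+1), a m • x m) = 0 → ∀ m < D + 1, a m = 0 := by
    intro a hsum
    set y : ℕ → Fin n → ℂ :=
      fun j => if j < D then ∑ i ∈ Finset.range (j+1), a (i + D - j) • x i else 0 with hydef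
    have hyhigh : ∀ j, D ≤ j → y j = 0 := by
      intro j hj; simp only [hydef]; rw [if_neg (by omega)]
    have hyA0 : A *ᵥ y 0 = 0 := by
      rcases Nat.eq_zero_or_pos D with hD | hD
      · rw [hyhigh 0 (by omega), Matrix.mulVec_zero]
      · have hy00 : y 0 = a (0 + D - 0) • x 0 := by
          simp only [hydef]; rw [if_pos hD, Finset.sum_range_one]
        rw [hy00, Matrix.mulVec_smul, hA0, smul_zero]
    have hyrec : ∀ m, A *ᵥ y (m+1) + B *ᵥ y m = 0 := by
      intro m
      rcases Nat.lt_or_ge (m+1) D with h1 | h1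
      · have hym1 : y (m+1) = ∑ i ∈ Finset.range (m+1+1), a (i + D - (m+1)) • x i := by
          simp only [hydef]; rw [if_pos h1]
        have hym : y m = ∑ i ∈ Finset.range (m+1), a (i + D - m) • x i := by
          simp only [hydef]; rw [if_pos (by omega : m < D)]
        rw [hym1, hym, mulVec_finsum, mulVec_finsum, Finset.sum_range_succ']
        rw [Matrix.mulVec_smul, hA0, smul_zero, add_zero, ← Finset.sum_add_distrib]
        apply Finset.sum_eq_zero
        intro i hi
        rw [Matrix.mulVec_smul, Matrix.mulVec_smul, hAneg i, smul_neg]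
        have he : a (i+1 + D - (m+1)) = a (i + D - m) := by congr 1; omega
        rw [he, neg_add_cancel]
      · by_cases h2 : m + 1 = D
        · have hymD : y (m+1) = 0 := hyhigh _ (by omega)
          have hym : y m = ∑ i ∈ Finset.range (m+1), a (i+1) • x i := by
            simp only [hydef]; rw [if_pos (by omega : m < D)]
            refine Finset.sum_congr rfl fun i hi => ?_
            congr 2
            rw [Finset.mem_range] at hi
            omega
          rw [hymD, Matrix.mulVec_zero, zero_add, hym, mulVec_finsum]
          have e : ∀ i ∈ Finset.range (m+1),
              B *ᵥ (a (i+1) • x i) = -(A *ᵥ (a (i+1) • x (i+1))) := by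
            intro i _
            rw [Matrix.mulVec_smul, Matrix.mulVec_smul, hAneg i, smul_neg, neg_neg]
          rw [Finset.sum_congr rfl e, Finset.sum_neg_distrib, neg_eq_zero, ← mulVec_finsum]
          have h5 := Finset.sum_range_succ' (fun i => a i • x i) (m+1)
          conv at h5 => lhs; rw [h2]
          rw [hsum] at h5
          have h6 : (∑ i ∈ Finset.range (m+1), a (i+1) • x (i+1)) = -(a 0 • x 0) :=
            eq_neg_of_add_eq_zero_left h5.symm
          rw [h6, Matrix.mulVec_neg, Matrix.mulVec_smul, hA0, smul_zero, neg_zero]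
        · rw [hyhigh (m+1) (by omega), hyhigh m (by omega), Matrix.mulVec_zero,
            Matrix.mulVec_zero, add_zero]
    set q : Fin n → ℂ[X] := fun i => ∑ m ∈ Finset.range D, Polynomial.C (y m i) * X ^ m with hqdef
    have hqc : ∀ m, (fun j => (q j).coeff m) = y m := by
      intro m; funext j
      simp only [hqdef]
      rw [coeff_build]
      split
      · rfl
      · exact (congrFun (hyhigh m (by omega)) j).symm
    have hq0 : q = 0 := by
      by_contra hq
      have hD1 : 1 ≤ D := by
        by_contra h
        apply hq; funext i
        simp only [hqdef]
        rw [show D = 0 from by omega]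
        simp
      apply hmin (D-1) (by omega)
      refine ⟨q, hq, ?_, ?_⟩
      · funext i
        rw [Pi.zero_apply]
        apply Polynomial.ext
        intro k
        rw [Polynomial.coeff_zero]
        cases k with
        | zero =>
          rw [pencil_coeff_zero A B q i, hqc 0]
          simpa using congrFun hyA0 i
        | succ m =>
          rw [pencil_coeff_succ A B q i m, hqc (m+1), hqc m]
          simpa using congrFun (hyrec m) i
      · intro i
        rw [Polynomial.natDegree_le_iff_coeff_eq_zero]
        intro N hN
        simp only [hqdef]
        rw [coeff_build, if_neg (by omega)]
    have hyz : ∀ j, j < D → y j = 0 := by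
      intro j hj
      funext i
      have h8 := congrFun (hqc j) i
      rw [hq0] at h8
      simpa using h8.symm
    have key : ∀ j, j < D → a (D - j) = 0 := by
      intro j
      induction j using Nat.strong_induction_on with
      | _ j IH =>
        intro hj
        have hyjs : (∑ i ∈ Finset.range (j+1), a (i + D - j) • x i) = 0 := by
          have h9 : y j = ∑ i ∈ Finset.range (j+1), a (i + D - j) • x i := by
            simp only [hydef]; rw [if_pos hj]
          rw [← h9]; exact hyz j hj
        rw [Finset.sum_range_succ'] at hyjs
        have hz : ∀ i ∈ Finset.range j, a (i+1 + D - j) • x (i+1) = 0 := by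
          intro i hi
          rw [Finset.mem_range] at hi
          have he : a (i+1+D-j) = a (D - (j - (i+1))) := by congr 1; omega
          rw [he, IH (j - (i+1)) (by omega) (by omega), zero_smul]
        rw [Finset.sum_eq_zero hz, zero_add] at hyjs
        rcases smul_eq_zero.mp hyjs with h | h
        · rw [← h]; congr 1; omega
        · exact absurd h hx0
    intro m hm
    rcases Nat.eq_zero_or_pos m with hm0 | hm1
    · subst hm0
      have h5 := Finset.sum_range_succ' (fun i => a i • x i) D
      rw [hsum] at h5
      have hz : ∀ i ∈ Finset.range D, a (i+1) • x (i+1) = 0 := by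
        intro i hi
        rw [Finset.mem_range] at hi
        have he : a (i+1) = a (D - (D - (i+1))) := by congr 1; omega
        rw [he, key (D - (i+1)) (by omega), zero_smul]
      rw [Finset.sum_eq_zero hz, zero_add] at h5
      rcases smul_eq_zero.mp h5.symm with h | h
      · exact h
      · exact absurd h hx0
    · have he : a m = a (D - (D - m)) := by congr 1; omega
      rw [he]
      exact key (D - m) (by omega)
  -- build the padded square system
  set G : Matrix (Fin (D+1)) (Fin (D+1)) ℂ :=
    fun j i => if (j:ℕ) < D then star (B *ᵥ x (j:ℕ)) ⬝ᵥ x (i:ℕ) else 0 with hGdef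
  have hGdet : G.det = 0 := by
    apply Matrix.det_eq_zero_of_row_eq_zero ⟨D, by omega⟩
    intro j
    simp [hGdef]
  obtain ⟨c, hc0, hGc⟩ := Matrix.exists_mulVec_eq_zero_iff.mpr hGdet
  set v : Fin n → ℂ := ∑ i : Fin (D+1), c i • x (i:ℕ) with hvdef
  have hv0 : v ≠ 0 := by
    intro hv
    apply hc0
    funext i
    have hsum : (∑ m ∈ Finset.range (D+1), (fun m => if h : m < D + 1 then c ⟨m, h⟩ else 0) m • x m) = 0 := by
      rw [Finset.sum_range]
      have h7 : ∀ i : Fin (D+1), ((fun m => if h : m < D + 1 then c ⟨m, h⟩ else 0) (i:ℕ)) • x (i:ℕ)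
          = c i • x (i:ℕ) := by
        intro i; simp [i.2]
      rw [Finset.sum_congr rfl (fun i _ => h7 i), ← hvdef]
      exact hv
    have := hindep _ hsum (i:ℕ) i.2
    rw [dif_pos i.2] at this
    simpa using this
  have horth : ∀ m, m < D → star v ⬝ᵥ (B *ᵥ x m) = 0 := by
    intro m hm
    have h := congrFun hGc ⟨m, by omega⟩
    have h2 : ∑ i : Fin (D+1), (star (B *ᵥ x m) ⬝ᵥ x (i:ℕ)) * c i = 0 := by
      simpa [Matrix.mulVec, dotProduct, hGdef, hm] using h
    have h3 : star (B *ᵥ x m) ⬝ᵥ v = 0 := by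
      rw [hvdef, dotProduct_finsum]
      simpa [dotProduct_smul, smul_eq_mul, mul_comm] using h2
    have := congrArg (starRingEnd ℂ) h3
    simpa [dotProduct, map_sum, mul_comm] using this
  have horthD : star v ⬝ᵥ (B *ᵥ x D) = 0 := by rw [hBD]; simp
  refine ⟨v, hv0, ?_, ?_⟩
  · have hAv : A *ᵥ v = ∑ i : Fin (D+1), c i • (A *ᵥ x (i:ℕ)) := by
      rw [hvdef, mulVec_finsum]
      congr 1; funext i; exact Matrix.mulVec_smul A (c i) _
    rw [hAv, dotProduct_finsum]
    apply Finset.sum_eq_zero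
    intro i _
    rcases Nat.eq_zero_or_pos (i:ℕ) with hi | hi
    · rw [hi, hA0]; simp
    · obtain ⟨m, hm⟩ : ∃ m, (i:ℕ) = m + 1 := ⟨(i:ℕ) - 1, by omega⟩
      rw [hm, hAneg m]
      have := horth m (by omega)
      simp [dotProduct_smul, this]
  · have hBv : B *ᵥ v = ∑ i : Fin (D+1), c i • (B *ᵥ x (i:ℕ)) := by
      rw [hvdef, mulVec_finsum]
      congr 1; funext i; exact Matrix.mulVec_smul B (c i) _
    rw [hBv, dotProduct_finsum]
    apply Finset.sum_eq_zero
    intro i _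
    rcases Nat.lt_or_ge (i:ℕ) D with hi | hi
    · have := horth i hi
      simp [dotProduct_smul, this]
    · have hiD : (i:ℕ) = D := by omega
      rw [hiD, hBD]; simp
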